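/- Let G be a finite group and H a proper subgroup. Then there exists g ∈ G such that the conjugacy class of g is disjoint from H; equivalently, the permutation character φ_{G/H} of the action of G on the cosets G/H vanishes at some element of G. -/
import Mathlib


/-- Jordan's theorem: a finite group is not the union of the conjugates of a proper
subgroup; there is an element whose conjugacy class is disjoint from `H`. -/
theorem stmt_15 {G : Type*} [Group G] [Fintype G] (H : Subgroup G) (hH : H ≠ ⊤) :
    ∃ g : G, ∀ x : G, x * g * x⁻¹ ∉ H := by
  classical
  by_contra hcon
  push_neg at hcon
  -- every g fixes a point of G ⧸ H
  have key : ∀ g : G, (MulAction.fixedBy (G ⧸ H) g).Nonempty := by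
    intro g
    obtain ⟨x, hx⟩ := hcon g
    refine ⟨QuotientGroup.mk x⁻¹, ?_⟩
    rw [MulAction.mem_fixedBy]
    show QuotientGroup.mk (g * x⁻¹) = QuotientGroup.mk x⁻¹
    rw [QuotientGroup.eq]
    have := H.inv_mem hx
    simpa [mul_assoc] using this
  have hsum := MulAction.sum_card_fixedBy_eq_card_orbits_mul_card_group G (G ⧸ H)
  have hΩ : Fintype.card (MulAction.orbitRel.Quotient G (G ⧸ H)) = 1 := by
    obtain ⟨u⟩ := (MulAction.pretransitive_iff_unique_quotient_of_nonempty G (G ⧸ H)).mp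
      inferInstance
    exact Fintype.card_eq_one_iff_nonempty_unique.mpr ⟨u⟩
  rw [hΩ, one_mul] at hsum
  have h1 : Fintype.card (MulAction.fixedBy (G ⧸ H) (1 : G)) = Fintype.card (G ⧸ H) := by
    have he : MulAction.fixedBy (G ⧸ H) (1 : G) = Set.univ := MulAction.fixedBy_one_eq_univ _ _
    calc Fintype.card (MulAction.fixedBy (G ⧸ H) (1 : G))
        = Fintype.card (Set.univ : Set (G ⧸ H)) := Fintype.card_congr (Equiv.setCongr he)
      _ = Fintype.card (G ⧸ H) := Fintype.card_congr (Equiv.Set.univ _)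
  have hQ : 2 ≤ Fintype.card (G ⧸ H) := by
    have h0 : Fintype.card (G ⧸ H) ≠ 0 := Fintype.card_ne_zero
    have h1' : Fintype.card (G ⧸ H) ≠ 1 := by
      intro h
      apply hH
      have : H.index = 1 := by rw [← Nat.card_eq_fintype_card] at h; exact h ▸ rfl
      exact Subgroup.index_eq_one.mp this
    omega
  have hlow : ∀ g : G, 1 ≤ Fintype.card (MulAction.fixedBy (G ⧸ H) g) := by
    intro g
    obtain ⟨x, hx⟩ := key g
    exact Fintype.card_pos_iff.mpr ⟨⟨x, hx⟩⟩
  have hsplit : Fintype.card (G ⧸ H) + (Fintype.card G - 1) ≤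
      ∑ g : G, Fintype.card (MulAction.fixedBy (G ⧸ H) g) := by
    rw [← Finset.sum_erase_add _ _ (Finset.mem_univ (1 : G)), h1]
    have : Fintype.card G - 1 ≤ ∑ g ∈ Finset.univ.erase (1 : G),
        Fintype.card (MulAction.fixedBy (G ⧸ H) g) := by
      calc Fintype.card G - 1 = (Finset.univ.erase (1 : G)).card := by
            rw [Finset.card_erase_of_mem (Finset.mem_univ _), Finset.card_univ]
        _ = ∑ _g ∈ Finset.univ.erase (1 : G), 1 := (Finset.card_eq_sum_ones _)
        _ ≤ _ := Finset.sum_le_sum (fun g _ => hlow g)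
    omega
  rw [hsum] at hsplit
  have hG : 1 ≤ Fintype.card G := Fintype.card_pos
  omega
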